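/- Let m ≥ 2 and let B ⊆ ℝ^m be a convex body. If the boundary ∂B contains an affine line {a + t d : t ∈ ℝ} with d ≠ 0, then ∂B is ruled by lines parallel to d: for every p ∈ ∂B and every t ∈ ℝ, the point p + t d lies in ∂B. -/
import Mathlib


open Set

theorem stmt_10 {m : ℕ} (hm : 2 ≤ m)
    (B : Set (EuclideanSpace ℝ (Fin m)))
    (hconv : Convex ℝ B) (hclosed : IsClosed B) (hint : (interior B).Nonempty)
    (a d : EuclideanSpace ℝ (Fin m)) (hd : d ≠ 0)
    (hline : ∀ t : ℝ, a + t • d ∈ frontier B) :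
    ∀ p ∈ frontier B, ∀ t : ℝ, p + t • d ∈ frontier B := by
  have hBsub : ∀ t : ℝ, a + t • d ∈ B := by
    intro t
    have := frontier_subset_closure (hline t)
    rwa [hclosed.closure_eq] at this
  -- B is invariant under translation by t • d
  have key : ∀ (t : ℝ) (x : EuclideanSpace ℝ (Fin m)), x ∈ B → x + t • d ∈ B := by
    intro t x hx
    have hmem : ∀ n : ℕ, x + (1 / (n + 1 : ℝ)) • (a - x) + t • d ∈ B := by
      intro n
      have hpos : (0:ℝ) < (n:ℝ) + 1 := by positivity
      have hc := hconv hx (hBsub ((n + 1) * t))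
        (a := 1 - 1 / ((n:ℝ) + 1)) (b := 1 / ((n:ℝ) + 1))
        (by rw [sub_nonneg]; exact div_le_one_of_le₀ (by linarith) (by linarith))
        (by positivity) (by ring)
      have heq : (1 - 1 / ((n:ℝ) + 1)) • x + (1 / ((n:ℝ) + 1)) • (a + (((n:ℝ) + 1) * t) • d)
          = x + (1 / ((n:ℝ) + 1)) • (a - x) + t • d := by
        have h1 : (1 / ((n:ℝ) + 1)) * (((n:ℝ) + 1) * t) = t := by
          field_simp
        rw [smul_add, smul_smul, h1, sub_smul, one_smul, smul_sub]
        abel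
      rwa [heq] at hc
    have hlim : Filter.Tendsto (fun n : ℕ => x + (1 / (n + 1 : ℝ)) • (a - x) + t • d)
        Filter.atTop (nhds (x + t • d)) := by
      have h0 : Filter.Tendsto (fun n : ℕ => (1 / (n + 1 : ℝ))) Filter.atTop (nhds 0) :=
        tendsto_one_div_add_atTop_nhds_zero_nat
      have h1 : Filter.Tendsto (fun n : ℕ => x + (1 / (n + 1 : ℝ)) • (a - x) + t • d)
          Filter.atTop (nhds (x + (0:ℝ) • (a - x) + t • d)) :=
        (Filter.Tendsto.add tendsto_const_nhds (h0.smul_const (a - x))).add tendsto_const_nhds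
      simpa using h1
    have : x + t • d ∈ closure B :=
      mem_closure_of_tendsto hlim (Filter.Eventually.of_forall hmem)
    rwa [hclosed.closure_eq] at this
  intro p hp t
  have hpre : (fun y : EuclideanSpace ℝ (Fin m) => y + t • d) ⁻¹' B = B := by
    ext y
    constructor
    · intro hy
      have := key (-t) _ hy
      simpa using this
    · exact key t y
  have h : (Homeomorph.addRight (t • d)) ⁻¹' frontier B = frontier B := by
    have h2 : (⇑(Homeomorph.addRight (t • d))) ⁻¹' B = B := by
      ext y
      show y + t • d ∈ B ↔ y ∈ B
      exact ⟨fun hy => by simpa using key (-t) _ hy, key t y⟩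
    rw [Homeomorph.preimage_frontier, h2]
  rw [← h] at hp
  exact hp
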